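/- Let p, q ∈ (1,∞) and n a nonnegative integer. Then ∫₀^{π_{p,q}/2} sin_{p,q}^{qn}(t) dt = [(1/q)_n / ((1/p* + 1/q)_n)] · π_{p,q}/2. -/

import Mathlib

open Set MeasureTheory Filter

/-- Generalized arcsine: `arcsin_{p,q}(x) = ∫₀ˣ (1 - tᵠ)^(-1/p) dt`. -/
noncomputable def gArcsin (p q x : ℝ) : ℝ := ∫ t in (0:ℝ)..x, (1 - t ^ q) ^ (-(1 / p))

/-- Generalized pi: `π_{p,q} = 2 ∫₀¹ (1 - tᵠ)^(-1/p) dt`. -/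
noncomputable def gPi (p q : ℝ) : ℝ := 2 * gArcsin p q 1

/-- `S` is the generalized sine `sin_{p,q}` (the inverse of `gArcsin p q` on `[0,1]`). -/
def IsGSin (p q : ℝ) (S : ℝ → ℝ) : Prop :=
  ∀ y ∈ Icc (0:ℝ) 1, S (gArcsin p q y) = y

/-- `C` is the generalized cosine `cos_{p,q}`, the derivative of `S = sin_{p,q}`
on `[0, π_{p,q}/2]`. -/
def IsGCos (p q : ℝ) (S C : ℝ → ℝ) : Prop :=
  ∀ x ∈ Icc (0:ℝ) (gPi p q / 2), HasDerivWithinAt S (C x) (Icc (0:ℝ) (gPi p q / 2)) x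



section Helpers
open intervalIntegral

private lemma measurable_w (p q : ℝ) : Measurable fun t : ℝ => (1 - t ^ q) ^ (-(1 / p)) :=
  (measurable_const.sub (measurable_id.pow measurable_const)).pow measurable_const

private lemma w_int {p q : ℝ} (hp : 1 < p) (hq : 1 < q) :
    IntervalIntegrable (fun t : ℝ => (1 - t ^ q) ^ (-(1 / p))) volume 0 1 := by
  have hp0 : (0:ℝ) < 1/p := by positivity
  have hp1 : 1/p < 1 := by rw [div_lt_one (by linarith)]; linarith
  have hg : IntervalIntegrable (fun t : ℝ => (1 - t) ^ (-(1 / p))) volume 0 1 := by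
    have h := (intervalIntegrable_rpow' (r := -(1/p)) (by linarith)
      (a := (0:ℝ)) (b := (1:ℝ))).comp_sub_left 1
    simpa using h.symm
  refine hg.mono_fun ((measurable_w p q).aestronglyMeasurable) ?_
  filter_upwards [ae_restrict_mem measurableSet_uIoc] with t ht
  rw [uIoc_of_le zero_le_one] at ht
  have ht0 : 0 < t := ht.1
  have ht1 : t ≤ 1 := ht.2
  have htq : t ^ q ≤ t := by
    calc t ^ q ≤ t ^ (1:ℝ) := Real.rpow_le_rpow_of_exponent_ge ht0 ht1 (by linarith)
    _ = t := Real.rpow_one t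
  have h1 : 0 ≤ 1 - t ^ q := by linarith
  have h2 : (1 - t ^ q) ^ (-(1 / p)) ≤ (1 - t) ^ (-(1 / p)) := by
    rcases eq_or_lt_of_le ht1 with h | h
    · subst h
      simp [Real.one_rpow, Real.zero_rpow (show -(1/p) ≠ 0 by intro hc; rw [neg_eq_zero] at hc; linarith)]
    · exact Real.rpow_le_rpow_of_nonpos (by linarith) (by linarith) (by linarith)
  simp only [Real.norm_eq_abs]
  rw [abs_of_nonneg (Real.rpow_nonneg h1 _),
    abs_of_nonneg (Real.rpow_nonneg (by linarith) _)]
  exact h2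

private lemma wq_pos {p q : ℝ} (hq : 1 < q) {t : ℝ} (ht0 : 0 ≤ t) (ht1 : t < 1) :
    0 < (1 - t ^ q) ^ (-(1 / p)) := by
  have : t ^ q < 1 := by
    rcases eq_or_lt_of_le ht0 with h | h
    · rw [← h, Real.zero_rpow (by linarith)]; norm_num
    · exact Real.rpow_lt_one ht0 ht1 (by linarith)
  exact Real.rpow_pos_of_pos (by linarith) _

private lemma w_nonneg {p q : ℝ} (hq : 1 < q) {t : ℝ} (ht0 : 0 ≤ t) (ht1 : t ≤ 1) :
    0 ≤ (1 - t ^ q) ^ (-(1 / p)) := by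
  have : t ^ q ≤ 1 := Real.rpow_le_one ht0 ht1 (by linarith)
  exact Real.rpow_nonneg (by linarith) _

private lemma wpow_int {p q : ℝ} (hp : 1 < p) (hq : 1 < q) {e : ℝ} (he : 0 ≤ e) :
    IntervalIntegrable (fun t : ℝ => t ^ e * (1 - t ^ q) ^ (-(1 / p))) volume 0 1 := by
  refine (w_int hp hq).mono_fun
    (((measurable_id.pow measurable_const).mul (measurable_w p q)).aestronglyMeasurable) ?_
  filter_upwards [ae_restrict_mem measurableSet_uIoc] with t ht
  rw [uIoc_of_le zero_le_one] at ht
  have h1 : 0 ≤ (1 - t ^ q) ^ (-(1 / p)) := w_nonneg hq ht.1.le ht.2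
  have h2 : t ^ e ≤ 1 := Real.rpow_le_one ht.1.le ht.2 he
  simp only [Real.norm_eq_abs]
  rw [abs_of_nonneg (mul_nonneg (Real.rpow_nonneg ht.1.le _) h1), abs_of_nonneg h1]
  nlinarith [Real.rpow_nonneg ht.1.le e]


private lemma gArcsin_zero (p q : ℝ) : gArcsin p q 0 = 0 :=
  intervalIntegral.integral_same

private lemma gArcsin_one (p q : ℝ) : gArcsin p q 1 = gPi p q / 2 := by
  rw [gPi]; ring

private lemma gArcsin_contOn {p q : ℝ} (hp : 1 < p) (hq : 1 < q) :
    ContinuousOn (gArcsin p q) (Icc 0 1) := by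
  have := continuousOn_primitive_interval' (w_int hp hq) (left_mem_uIcc (a := (0:ℝ)) (b := 1))
  rwa [uIcc_of_le zero_le_one] at this

private lemma gArcsin_strictMonoOn {p q : ℝ} (hp : 1 < p) (hq : 1 < q) :
    StrictMonoOn (gArcsin p q) (Icc 0 1) := by
  intro x hx y hy hxy
  have hix : IntervalIntegrable (fun t : ℝ => (1 - t ^ q) ^ (-(1 / p))) volume 0 x :=
    (w_int hp hq).mono_set' (by
      rw [uIoc_of_le hx.1, uIoc_of_le zero_le_one]
      exact Ioc_subset_Ioc le_rfl hx.2)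
  have hixy : IntervalIntegrable (fun t : ℝ => (1 - t ^ q) ^ (-(1 / p))) volume x y :=
    (w_int hp hq).mono_set' (by
      rw [uIoc_of_le hxy.le, uIoc_of_le zero_le_one]
      exact Ioc_subset_Ioc hx.1 hy.2)
  have hpos : 0 < ∫ t in x..y, (1 - t ^ q) ^ (-(1 / p)) := by
    refine intervalIntegral.intervalIntegral_pos_of_pos_on hixy (fun t ht => ?_) hxy
    exact wq_pos hq (hx.1.trans ht.1.le) (lt_of_lt_of_le ht.2 hy.2)
  have := intervalIntegral.integral_add_adjacent_intervals hix hixy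
  show gArcsin p q x < gArcsin p q y
  rw [gArcsin, gArcsin, ← this]
  linarith

private lemma gArcsin_image {p q : ℝ} (hp : 1 < p) (hq : 1 < q) :
    gArcsin p q '' (Icc 0 1) = Icc 0 (gPi p q / 2) := by
  apply Subset.antisymm
  · rintro t ⟨y, hy, rfl⟩
    have h0 := (gArcsin_strictMonoOn hp hq).monotoneOn
    constructor
    · rw [← gArcsin_zero p q]
      exact h0 (left_mem_Icc.2 zero_le_one) hy hy.1
    · rw [← gArcsin_one p q]
      exact h0 hy (right_mem_Icc.2 zero_le_one) hy.2
  · intro t ht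
    have := intermediate_value_Icc (zero_le_one) (gArcsin_contOn hp hq)
    apply this
    rwa [gArcsin_zero, gArcsin_one]

private lemma gPi_nonneg {p q : ℝ} (hp : 1 < p) (hq : 1 < q) : 0 ≤ gPi p q / 2 := by
  have h := (gArcsin_strictMonoOn hp hq).monotoneOn (left_mem_Icc.2 zero_le_one)
    (right_mem_Icc.2 zero_le_one) zero_le_one
  rw [gArcsin_zero, gArcsin_one] at h
  exact h

private lemma S_inv {p q : ℝ} {S : ℝ → ℝ} (hp : 1 < p) (hq : 1 < q) (hS : IsGSin p q S) :
    ∀ t ∈ Icc (0:ℝ) (gPi p q / 2), S t ∈ Icc (0:ℝ) 1 ∧ gArcsin p q (S t) = t := by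
  intro t ht
  have : t ∈ gArcsin p q '' (Icc 0 1) := by rw [gArcsin_image hp hq]; exact ht
  obtain ⟨y, hy, hyt⟩ := this
  have hSt : S t = y := by rw [← hyt]; exact hS y hy
  exact ⟨hSt ▸ hy, by rw [hSt, hyt]⟩

private lemma S_contOn {p q : ℝ} {S : ℝ → ℝ} (hp : 1 < p) (hq : 1 < q) (hS : IsGSin p q S) :
    ContinuousOn S (Icc (0:ℝ) (gPi p q / 2)) := by
  have h0 := gPi_nonneg hp hq
  have hfS := S_inv hp hq hS
  let e : Icc (0:ℝ) 1 ≃ Icc (0:ℝ) (gPi p q / 2) :=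
    { toFun := fun x => ⟨gArcsin p q x, by
        rw [← gArcsin_image hp hq]; exact mem_image_of_mem _ x.2⟩
      invFun := fun t => ⟨S t, (hfS t t.2).1⟩
      left_inv := fun x => Subtype.ext (hS x x.2)
      right_inv := fun t => Subtype.ext (hfS t t.2).2 }
  have hcont : Continuous e := by
    exact Continuous.subtype_mk (gArcsin_contOn hp hq).restrict _
  let h := Continuous.homeoOfEquivCompactToT2 (f := e) hcont
  have hT : Continuous fun t => ((h.symm (projIcc 0 (gPi p q / 2) h0 t) : Icc (0:ℝ) 1) : ℝ) :=
    continuous_subtype_val.comp (h.symm.continuous.comp (continuous_projIcc))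
  refine ContinuousOn.congr hT.continuousOn ?_
  intro t ht
  have : projIcc 0 (gPi p q / 2) h0 t = ⟨t, ht⟩ := projIcc_of_mem h0 ht
  show S t = ((h.symm (projIcc 0 (gPi p q / 2) h0 t) : Icc (0:ℝ) 1) : ℝ)
  rw [this]
  rfl

private lemma partA {p q : ℝ} {S : ℝ → ℝ} (hp : 1 < p) (hq : 1 < q) (hS : IsGSin p q S)
    {e : ℝ} (he : 0 ≤ e) :
    ∫ t in (0:ℝ)..(gPi p q / 2), S t ^ e
      = ∫ x in (0:ℝ)..1, x ^ e * (1 - x ^ q) ^ (-(1 / p)) := by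
  set w : ℝ → ℝ := fun t => (1 - t ^ q) ^ (-(1 / p)) with hw
  set g : ℝ → ℝ := fun t => S t ^ e with hgdef
  have huIcc : Set.uIcc (0:ℝ) 1 = Icc (0:ℝ) 1 := uIcc_of_le zero_le_one
  have himg : gArcsin p q '' Icc 0 1 = Icc 0 (gPi p q / 2) := gArcsin_image hp hq
  have hgc : ContinuousOn g (Icc 0 (gPi p q / 2)) :=
    (S_contOn hp hq hS).rpow_const (fun t _ => Or.inr he)
  have key := intervalIntegral.integral_comp_smul_deriv''' (a := (0:ℝ)) (b := 1)
    (f := gArcsin p q) (f' := w) (g := g)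
    (by rw [huIcc]; exact gArcsin_contOn hp hq)
    (by
      intro x hx
      rw [min_eq_left zero_le_one, max_eq_right zero_le_one] at hx
      have hint : IntervalIntegrable w volume 0 x :=
        (w_int hp hq).mono_set' (by
          rw [uIoc_of_le hx.1.le, uIoc_of_le zero_le_one]
          exact Ioc_subset_Ioc le_rfl hx.2.le)
      have hmeas : StronglyMeasurableAtFilter w (nhds x) :=
        ⟨univ, univ_mem, (measurable_w p q).aestronglyMeasurable⟩
      have hxq : 0 < 1 - x ^ q := by
        have : x ^ q < 1 := Real.rpow_lt_one hx.1.le hx.2 (by linarith)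
        linarith
      have hcw : ContinuousAt w x := by
        refine ContinuousAt.rpow_const ?_ (Or.inl (ne_of_gt hxq))
        exact continuousAt_const.sub (Real.continuousAt_rpow_const x q (Or.inr (by linarith)))
      exact (intervalIntegral.integral_hasDerivAt_right hint hmeas hcw).hasDerivWithinAt)
    (by
      rw [min_eq_left zero_le_one, max_eq_right zero_le_one]
      refine hgc.mono ?_
      rw [← himg]
      exact image_mono Ioo_subset_Icc_self)
    (by
      rw [huIcc, himg]
      exact hgc.integrableOn_Icc)
    (by
      rw [huIcc]
      have hi : IntegrableOn (fun x : ℝ => x ^ e * w x) (Icc (0:ℝ) 1) :=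
        (intervalIntegrable_iff_integrableOn_Icc_of_le zero_le_one).mp (wpow_int hp hq he)
      refine hi.congr_fun ?_ measurableSet_Icc
      intro x hx
      show x ^ e * w x = w x • (g ∘ gArcsin p q) x
      simp only [Function.comp_apply, hgdef, smul_eq_mul]
      rw [hS x hx, mul_comm])
  rw [gArcsin_zero, gArcsin_one] at key
  rw [← key]
  refine intervalIntegral.integral_congr ?_
  intro x hx
  rw [huIcc] at hx
  show w x • (g ∘ gArcsin p q) x = x ^ e * w x
  simp only [Function.comp_apply, hgdef, smul_eq_mul]
  rw [hS x hx, mul_comm]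

private lemma partB_step {p q : ℝ} (hp : 1 < p) (hq : 1 < q) {c : ℝ} (hc : 0 ≤ c) :
    (c + 1 + q * (1 - 1/p)) * ∫ x in (0:ℝ)..1, x ^ (c + q) * (1 - x ^ q) ^ (-(1 / p))
      = (c + 1) * ∫ x in (0:ℝ)..1, x ^ c * (1 - x ^ q) ^ (-(1 / p)) := by
  set b : ℝ := 1 - 1/p with hb
  have hb0 : 0 < b := by
    rw [hb]; have : 1/p < 1 := by rw [div_lt_one (by linarith)]; linarith
    linarith
  have hq0 : (0:ℝ) < q := by linarith
  set F : ℝ → ℝ := fun x => x ^ (c+1) * (1 - x ^ q) ^ b with hF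
  set φ : ℝ → ℝ := fun x => (c+1) * (x ^ c * (1 - x ^ q) ^ (-(1/p)))
      - (c + 1 + q * b) * (x ^ (c+q) * (1 - x ^ q) ^ (-(1/p))) with hφ
  have hcont : ContinuousOn F (Icc (0:ℝ) 1) := by
    refine ContinuousOn.mul ?_ ?_
    · exact continuousOn_id.rpow_const (fun x _ => Or.inr (by linarith))
    · refine ContinuousOn.rpow_const ?_ (fun x _ => Or.inr hb0.le)
      exact continuousOn_const.sub (continuousOn_id.rpow_const (fun x _ => Or.inr hq0.le))
  have hderiv : ∀ x ∈ Ioo (0:ℝ) 1, HasDerivWithinAt F (φ x) (Ioi x) x := by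
    intro x hx
    have hx0 : 0 < x := hx.1
    have hu : 0 < 1 - x ^ q := by
      have : x ^ q < 1 := Real.rpow_lt_one hx0.le hx.2 hq0
      linarith
    have h1 : HasDerivAt (fun x : ℝ => x ^ (c+1)) ((c+1) * x ^ c) x := by
      have := Real.hasDerivAt_rpow_const (p := c+1) (x := x) (Or.inl hx0.ne')
      simpa using this
    have hinner : HasDerivAt (fun x : ℝ => 1 - x ^ q) (-(q * x ^ (q-1))) x := by
      have := Real.hasDerivAt_rpow_const (p := q) (x := x) (Or.inl hx0.ne')
      have h := (hasDerivAt_const x (1:ℝ)).sub this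
      simp only [zero_sub] at h
      exact h
    have houter : HasDerivAt (fun u : ℝ => u ^ b) (b * (1 - x ^ q) ^ (b-1)) (1 - x ^ q) :=
      Real.hasDerivAt_rpow_const (Or.inl hu.ne')
    have h2 : HasDerivAt (fun x : ℝ => (1 - x ^ q) ^ b)
        (b * (1 - x ^ q) ^ (b-1) * -(q * x ^ (q-1))) x := by
      have h := houter.comp x hinner
      exact h
    have hprod := h1.mul h2
    refine (hprod.congr_deriv ?_).hasDerivWithinAt
    have e1 : (1 - x ^ q) ^ b = (1 - x ^ q) * (1 - x ^ q) ^ (-(1/p)) := by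
      rw [hb, show (1:ℝ) - 1/p = 1 + -(1/p) by ring, Real.rpow_add hu, Real.rpow_one]
    have e2 : (1 - x ^ q) ^ (b - 1) = (1 - x ^ q) ^ (-(1/p)) := by
      rw [hb]; norm_num
    have e3 : x ^ (c+q) = x ^ (c+1) * x ^ (q-1) := by
      rw [← Real.rpow_add hx0]; ring_nf
    have e4 : x ^ c * x ^ q = x ^ (c+q) := by rw [← Real.rpow_add hx0]
    rw [hφ]
    simp only []
    rw [e1, e2, e3]
    have e5 : x ^ c * x ^ q = x ^ (c+1) * x ^ (q-1) := e4.trans e3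
    linear_combination (-(c+1) * (1 - x ^ q) ^ (-(1/p))) * e5
  have hint : IntervalIntegrable φ volume 0 1 := by
    refine IntervalIntegrable.sub ((wpow_int hp hq hc).const_mul _) ?_
    exact (wpow_int hp hq (by linarith : (0:ℝ) ≤ c + q)).const_mul _
  have hftc := intervalIntegral.integral_eq_sub_of_hasDeriv_right_of_le zero_le_one
    hcont hderiv hint
  have hF1 : F 1 = 0 := by
    rw [hF]; simp [Real.one_rpow, Real.zero_rpow hb0.ne']
  have hF0 : F 0 = 0 := by
    rw [hF]; simp [Real.zero_rpow (by linarith : c + 1 ≠ 0)]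
  rw [hF1, hF0, sub_zero] at hftc
  rw [hφ] at hftc
  rw [intervalIntegral.integral_sub ((wpow_int hp hq hc).const_mul _)
      ((wpow_int hp hq (by linarith : (0:ℝ) ≤ c + q)).const_mul _),
    intervalIntegral.integral_const_mul, intervalIntegral.integral_const_mul] at hftc
  linarith [hftc]

private lemma poch_pos {x : ℝ} (hx : 0 < x) (k : ℕ) : 0 < (ascPochhammer ℝ k).eval x := by
  induction k with
  | zero => simp
  | succ k ih =>
      rw [ascPochhammer_succ_eval]
      have : (0:ℝ) < x + k := by positivity
      exact mul_pos ih this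

private lemma partB {p q : ℝ} (hp : 1 < p) (hq : 1 < q) (n : ℕ) :
    ∫ x in (0:ℝ)..1, x ^ (q * n) * (1 - x ^ q) ^ (-(1 / p))
      = (ascPochhammer ℝ n).eval (1 / q) /
          (ascPochhammer ℝ n).eval ((1 - 1 / p) + 1 / q) * (gPi p q / 2) := by
  have hq0 : (0:ℝ) < q := by linarith
  have hb0 : (0:ℝ) < 1 - 1/p := by
    have : 1/p < 1 := by rw [div_lt_one (by linarith)]; linarith
    linarith
  induction n with
  | zero =>
      simp only [Nat.cast_zero, mul_zero, Real.rpow_zero, one_mul, ascPochhammer_zero,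
        Polynomial.eval_one]
      rw [div_one, one_mul]
      exact gArcsin_one p q
  | succ k ih =>
      have hc : (0:ℝ) ≤ q * k := by positivity
      have hD : (0:ℝ) < q * k + 1 + q * (1 - 1/p) := by positivity
      have hstep := partB_step hp hq hc
      have hcast : q * ((k:ℕ)+1 : ℕ) = q * (k:ℝ) + q := by push_cast; ring
      rw [hcast]
      have hJ : ∫ x in (0:ℝ)..1, x ^ (q * (k:ℝ) + q) * (1 - x ^ q) ^ (-(1 / p))
          = (q * k + 1) * (∫ x in (0:ℝ)..1, x ^ (q * (k:ℝ)) * (1 - x ^ q) ^ (-(1 / p)))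
            / (q * k + 1 + q * (1 - 1/p)) := by
        rw [eq_div_iff hD.ne']
        linarith [hstep]
      rw [hJ, ih, ascPochhammer_succ_eval, ascPochhammer_succ_eval]
      have hPs : (Polynomial.eval (1 - 1/p + 1/q) (ascPochhammer ℝ k)) ≠ 0 :=
        (poch_pos (by positivity) k).ne'
      have h1 : q * (k:ℝ) + 1 + q * (1 - 1/p) = q * ((1 - 1/p + 1/q) + k) := by
        field_simp; ring
      have h2 : q * (k:ℝ) + 1 = q * (1/q + k) := by
        field_simp; ring
      rw [h1, h2]
      generalize Polynomial.eval (1/q) (ascPochhammer ℝ k) = A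
      generalize hBv : Polynomial.eval (1 - 1/p + 1/q) (ascPochhammer ℝ k) = Bv at hPs ⊢
      have hsk : ((1:ℝ) - 1/p + 1/q + k) ≠ 0 := by positivity
      field_simp

end Helpers

/-- Corollary 3.5, first formula:
`∫₀^{π_{p,q}/2} sin_{p,q}^{qn} t dt = (1/q)ₙ/((1/p* + 1/q)ₙ) · π_{p,q}/2`. -/
theorem stmt_10 (p q : ℝ) (n : ℕ) (hp : 1 < p) (hq : 1 < q)
    (S : ℝ → ℝ) (hS : IsGSin p q S) :
    ∫ t in (0:ℝ)..(gPi p q / 2), S t ^ (q * (n : ℝ)) =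
      (ascPochhammer ℝ n).eval (1 / q) /
          (ascPochhammer ℝ n).eval (1 / (p / (p - 1)) + 1 / q) *
        (gPi p q / 2) := by
  have hB : 1 / (p / (p - 1)) = 1 - 1 / p := by
    rw [one_div_div, sub_div, div_self (by linarith : p ≠ 0)]
  rw [hB, partA hp hq hS (by positivity : (0:ℝ) ≤ q * (n:ℝ))]
  exact partB hp hq n
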